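/- Let S = ⟨4, n_1, n_2, n_3⟩ be a maximal embedding dimension numerical semigroup with n_i ≡ i (mod 4) and min(n_1, n_2, n_3) ≠ n_2. Then S is bland: LD(S) = 1/max Δ(S). -/

import Mathlib

open Finset

namespace LengthDensity

/-- The set of factorizations of `n` with respect to generators `g`. -/
def facs {k : ℕ} (g : Fin k → ℕ) (n : ℕ) : Set (Fin k → ℕ) :=
  {z | ∑ i, z i * g i = n}

/-- Membership in the numerical semigroup generated by `g`. -/
def mem {k : ℕ} (g : Fin k → ℕ) (n : ℕ) : Prop := (facs g n).Nonempty

/-- The set of factorization lengths of `n`. -/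
def lengthSet {k : ℕ} (g : Fin k → ℕ) (n : ℕ) : Set ℕ :=
  (fun z => ∑ i, z i) '' facs g n

/-- Length density of an element. -/
noncomputable def LD {k : ℕ} (g : Fin k → ℕ) (n : ℕ) : ℝ :=
  (((lengthSet g n).ncard : ℝ) - 1) /
    (((sSup (lengthSet g n) : ℕ) : ℝ) - ((sInf (lengthSet g n) : ℕ) : ℝ))

/-- Length density of the semigroup: infimum of `LD` over elements with
non-singleton length set. -/
noncomputable def LDsgp {k : ℕ} (g : Fin k → ℕ) : ℝ :=
  sInf {x : ℝ | ∃ n : ℕ, 2 ≤ (lengthSet g n).ncard ∧ x = LD g n}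

/-- The delta set (successive gaps) of a set of naturals. -/
def deltaOf (L : Set ℕ) : Set ℕ :=
  {d | ∃ a ∈ L, ∃ b ∈ L, a < b ∧ (∀ c ∈ L, ¬(a < c ∧ c < b)) ∧ d = b - a}

/-- The delta set of an element. -/
def delta {k : ℕ} (g : Fin k → ℕ) (n : ℕ) : Set ℕ := deltaOf (lengthSet g n)

/-- The delta set of the semigroup. -/
def Delta {k : ℕ} (g : Fin k → ℕ) : Set ℕ := ⋃ n : ℕ, delta g n

/-- Adjacency in the factorization graph of `n`: two factorizations of `n`
sharing a positive coordinate. -/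
def adj {k : ℕ} (g : Fin k → ℕ) (n : ℕ) (z z' : Fin k → ℕ) : Prop :=
  z ∈ facs g n ∧ z' ∈ facs g n ∧ ∃ i, 0 < z i ∧ 0 < z' i

/-- `n` is a Betti element: its factorization graph is disconnected. -/
def IsBetti {k : ℕ} (g : Fin k → ℕ) (n : ℕ) : Prop :=
  ∃ z ∈ facs g n, ∃ z' ∈ facs g n, ¬ Relation.ReflTransGen (adj g n) z z'

/-- The semigroup is tasty: `LD(S) > 1 / max Δ(S)`. -/
def Tasty {k : ℕ} (g : Fin k → ℕ) : Prop := LDsgp g > 1 / ((sSup (Delta g) : ℕ) : ℝ)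

/-- The semigroup is bland: `LD(S) = 1 / max Δ(S)`. -/
def Bland {k : ℕ} (g : Fin k → ℕ) : Prop := LDsgp g = 1 / ((sSup (Delta g) : ℕ) : ℝ)

/-- `g` is a minimal generating set: no generator is a nonnegative integer
combination of the others. -/
def IsMinGen {k : ℕ} (g : Fin k → ℕ) : Prop :=
  ∀ i, ¬ ∃ z : Fin k → ℕ, z i = 0 ∧ ∑ j, z j * g j = g i

/-- `n` is a non-atom of the semigroup generated by `g`:
it is a sum of two nonzero elements. -/
def NonAtom {k : ℕ} (g : Fin k → ℕ) (n : ℕ) : Prop :=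
  ∃ a b : ℕ, 0 < a ∧ 0 < b ∧ mem g a ∧ mem g b ∧ n = a + b


set_option maxHeartbeats 1000000

lemma mem_ls_iff (n1 n2 n3 n L : ℕ) :
    L ∈ lengthSet ![4, n1, n2, n3] n ↔
      ∃ t a b c, 4*t + a*n1 + b*n2 + c*n3 = n ∧ t+a+b+c = L := by
  constructor
  · rintro ⟨z, hz, rfl⟩
    refine ⟨z 0, z 1, z 2, z 3, ?_, ?_⟩
    · have := hz
      simp only [facs, Set.mem_setOf_eq, Fin.sum_univ_four] at this
      simp only [Matrix.cons_val_zero, Matrix.cons_val_one, Matrix.head_cons,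
        Matrix.cons_val_two, Matrix.tail_cons, Matrix.cons_val_three] at this
      omega
    · simp [Fin.sum_univ_four]
  · rintro ⟨t, a, b, c, h, rfl⟩
    refine ⟨![t, a, b, c], ?_, ?_⟩
    · simp only [facs, Set.mem_setOf_eq, Fin.sum_univ_four]
      simp only [Matrix.cons_val_zero, Matrix.cons_val_one, Matrix.head_cons,
        Matrix.cons_val_two, Matrix.tail_cons, Matrix.cons_val_three]
      omega
    · simp [Fin.sum_univ_four]

lemma maxlen (n1 n2 n3 : ℕ) (h1 : 4 < n1) (h2 : 4 < n2) (h3 : 4 < n3)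
    (hm1 : n1 % 4 = 1) (hm2 : n2 % 4 = 2) (hm3 : n3 % 4 = 3)
    (hc1 : n2 < 2 * n1) (hc2 : n3 < n1 + n2) (hc3 : n1 < n2 + n3)
    (hc4 : n2 < 2 * n3) :
    ∀ s t' a' b' c' t a b c,
      4*t' + a'*n1 + b'*n2 + c'*n3 = 4*t + a*n1 + b*n2 + c*n3 →
      a + b + c ≤ 1 → a' + b' + c' = s →
      t' + a' + b' + c' ≤ t + a + b + c := by
  obtain ⟨a0, ha0, ha0'⟩ : ∃ a0, n1 + n3 = 4*a0 ∧ 2 ≤ a0 := ⟨(n1+n3)/4, by omega⟩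
  obtain ⟨q, hq, hq'⟩ : ∃ q, 2*n2 = 4*q ∧ 2 ≤ q := ⟨(2*n2)/4, by omega⟩
  obtain ⟨k1, hk1, hk1'⟩ : ∃ k, n1 + n2 = n3 + 4*k ∧ 1 ≤ k := ⟨(n1+n2-n3)/4, by omega⟩
  obtain ⟨k2, hk2, hk2'⟩ : ∃ k, n2 + n3 = n1 + 4*k ∧ 1 ≤ k := ⟨(n2+n3-n1)/4, by omega⟩
  obtain ⟨e1, he1, he1'⟩ : ∃ k, 2*n1 = n2 + 4*k ∧ 1 ≤ k := ⟨(2*n1-n2)/4, by omega⟩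
  obtain ⟨e2, he2, he2'⟩ : ∃ k, 2*n3 = n2 + 4*k ∧ 1 ≤ k := ⟨(2*n3-n2)/4, by omega⟩
  intro s
  induction s using Nat.strong_induction_on with
  | _ s IH =>
    intro t' a' b' c' t a b c heq hterm hs
    by_cases hs' : a' + b' + c' ≤ 1
    · -- both terminal
      have ha : a ≤ 1 := by omega
      have hb : b ≤ 1 := by omega
      have hc : c ≤ 1 := by omega
      have ha' : a' ≤ 1 := by omega
      have hb' : b' ≤ 1 := by omega
      have hc' : c' ≤ 1 := by omega
      interval_cases a <;> interval_cases b <;> interval_cases c <;>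
        interval_cases a' <;> interval_cases b' <;> interval_cases c' <;> omega
    · -- non-terminal: apply a trade on primed side
      rcases Nat.lt_or_ge 0 a' with hA' | hA'
      · rcases Nat.lt_or_ge 0 b' with hB' | hB'
        · -- trade (1,2) -> 3
          obtain ⟨x, rfl⟩ : ∃ x, a' = x + 1 := ⟨a' - 1, by omega⟩
          obtain ⟨y, rfl⟩ : ∃ y, b' = y + 1 := ⟨b' - 1, by omega⟩
          have heq2 : 4*(t'+k1) + x*n1 + y*n2 + (c'+1)*n3
              = 4*t + a*n1 + b*n2 + c*n3 := by simp only [add_mul, one_mul] at heq ⊢; omega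
          have := IH (x + y + (c'+1)) (by omega) (t'+k1) x y (c'+1) t a b c heq2 hterm rfl
          omega
        · rcases Nat.lt_or_ge 0 c' with hC' | hC'
          · -- trade (1,3) -> ∅
            obtain ⟨x, rfl⟩ : ∃ x, a' = x + 1 := ⟨a' - 1, by omega⟩
            obtain ⟨z, rfl⟩ : ∃ z, c' = z + 1 := ⟨c' - 1, by omega⟩
            have heq2 : 4*(t'+a0) + x*n1 + b'*n2 + z*n3
                = 4*t + a*n1 + b*n2 + c*n3 := by simp only [add_mul, one_mul] at heq ⊢; omega
            have := IH (x + b' + z) (by omega) (t'+a0) x b' z t a b c heq2 hterm rfl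
            omega
          · -- a' ≥ 2 (b' = c' = 0)
            obtain ⟨x, rfl⟩ : ∃ x, a' = x + 2 := ⟨a' - 2, by omega⟩
            have heq2 : 4*(t'+e1) + x*n1 + (b'+1)*n2 + c'*n3
                = 4*t + a*n1 + b*n2 + c*n3 := by simp only [add_mul, one_mul] at heq ⊢; omega
            have := IH (x + (b'+1) + c') (by omega) (t'+e1) x (b'+1) c' t a b c heq2 hterm rfl
            omega
      · rcases Nat.lt_or_ge 0 b' with hB' | hB'
        · rcases Nat.lt_or_ge 0 c' with hC' | hC'
          · -- trade (2,3) -> 1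
            obtain ⟨y, rfl⟩ : ∃ y, b' = y + 1 := ⟨b' - 1, by omega⟩
            obtain ⟨z, rfl⟩ : ∃ z, c' = z + 1 := ⟨c' - 1, by omega⟩
            have heq2 : 4*(t'+k2) + (a'+1)*n1 + y*n2 + z*n3
                = 4*t + a*n1 + b*n2 + c*n3 := by simp only [add_mul, one_mul] at heq ⊢; omega
            have := IH ((a'+1) + y + z) (by omega) (t'+k2) (a'+1) y z t a b c heq2 hterm rfl
            omega
          · -- b' ≥ 2
            obtain ⟨y, rfl⟩ : ∃ y, b' = y + 2 := ⟨b' - 2, by omega⟩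
            have heq2 : 4*(t'+q) + a'*n1 + y*n2 + c'*n3
                = 4*t + a*n1 + b*n2 + c*n3 := by simp only [add_mul, one_mul] at heq ⊢; omega
            have := IH (a' + y + c') (by omega) (t'+q) a' y c' t a b c heq2 hterm rfl
            omega
        · -- c' ≥ 2
          obtain ⟨z, rfl⟩ : ∃ z, c' = z + 2 := ⟨c' - 2, by omega⟩
          have heq2 : 4*(t'+e2) + a'*n1 + (b'+1)*n2 + z*n3
              = 4*t + a*n1 + b*n2 + c*n3 := by simp only [add_mul, one_mul] at heq ⊢; omega
          have := IH (a' + (b'+1) + z) (by omega) (t'+e2) a' (b'+1) z t a b c heq2 hterm rfl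
          omega

lemma step (n1 n2 n3 AA QQ : ℕ) (h1 : 4 < n1) (h2 : 4 < n2) (h3 : 4 < n3)
    (hm1 : n1 % 4 = 1) (hm2 : n2 % 4 = 2) (hm3 : n3 % 4 = 3)
    (hc1 : n2 < 2 * n1) (hc2 : n3 < n1 + n2) (hc3 : n1 < n2 + n3)
    (hc4 : n2 < 2 * n3)
    (hmin2 : min n1 (min n2 n3) ≠ n2)
    (hAA : n1 + n3 = 4*AA + 8) (hQQ : n2 = 2*QQ + 4) :
    ∀ s t a b c t' a' b' c' n,
      4*t + a*n1 + b*n2 + c*n3 = n →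
      4*t' + a'*n1 + b'*n2 + c'*n3 = n →
      t + a + b + c < t' + a' + b' + c' →
      a + b + c = s →
      ∃ T A B C, 4*T + A*n1 + B*n2 + C*n3 = n ∧
        t + a + b + c < T + A + B + C ∧
        T + A + B + C ≤ t + a + b + c + min AA QQ := by
  obtain ⟨k1, hk1⟩ : ∃ k, n1 + n2 = n3 + 4*k + 4 := ⟨(n1+n2-n3-4)/4, by omega⟩
  obtain ⟨k2, hk2⟩ : ∃ k, n2 + n3 = n1 + 4*k + 4 := ⟨(n2+n3-n1-4)/4, by omega⟩
  obtain ⟨g1, hg1⟩ : ∃ k, 2*n1 = n2 + 4*k + 4 := ⟨(2*n1-n2-4)/4, by omega⟩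
  obtain ⟨g2, hg2⟩ : ∃ k, 2*n3 = n2 + 4*k + 4 := ⟨(2*n3-n2-4)/4, by omega⟩
  intro s
  induction s using Nat.strong_induction_on with
  | _ s IH =>
    intro t a b c t' a' b' c' n heq heq' hlt hs
    have hterm : ¬ (a + b + c ≤ 1) := by
      intro hterm
      have := maxlen n1 n2 n3 h1 h2 h3 hm1 hm2 hm3 hc1 hc2 hc3 hc4
        (a'+b'+c') t' a' b' c' t a b c (by omega) hterm rfl
      omega
    rcases Nat.lt_or_ge 0 a with hA | hA
    · rcases Nat.lt_or_ge 0 b with hB | hB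
      · -- trade (1,2) -> 3, gain k1
        obtain ⟨x, rfl⟩ : ∃ x, a = x + 1 := ⟨a - 1, by omega⟩
        obtain ⟨y, rfl⟩ : ∃ y, b = y + 1 := ⟨b - 1, by omega⟩
        have heq2 : 4*(t+k1+1) + x*n1 + y*n2 + (c+1)*n3 = n := by simp only [add_mul, one_mul] at heq ⊢; omega
        rcases Nat.lt_or_ge 0 k1 with hk | hk
        · exact ⟨t+k1+1, x, y, c+1, heq2, by omega, by omega⟩
        · obtain ⟨T, A, B, C, H1, H2, H3⟩ :=
            IH (x + y + (c+1)) (by omega) (t+k1+1) x y (c+1) t' a' b' c' n heq2 heq' (by omega) rfl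
          exact ⟨T, A, B, C, H1, by omega, by omega⟩
      · rcases Nat.lt_or_ge 0 c with hC | hC
        · -- trade (1,3)
          obtain ⟨x, rfl⟩ : ∃ x, a = x + 1 := ⟨a - 1, by omega⟩
          obtain ⟨z, rfl⟩ : ∃ z, c = z + 1 := ⟨c - 1, by omega⟩
          rcases le_or_gt AA QQ with hAQ | hAQ
          · have heq2 : 4*(t+AA+2) + x*n1 + b*n2 + z*n3 = n := by simp only [add_mul, one_mul] at heq ⊢; omega
            exact ⟨t+AA+2, x, b, z, heq2, by omega, by omega⟩
          · have hkey : AA ≤ 2*QQ := by omega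
            obtain ⟨d, hd1, hd2, hd3⟩ : ∃ d, AA = QQ + d ∧ 1 ≤ d ∧ d ≤ QQ :=
              ⟨AA - QQ, by omega⟩
            have heq2 : 4*(t+d) + x*n1 + (b+2)*n2 + z*n3 = n := by simp only [add_mul, one_mul] at heq ⊢; omega
            exact ⟨t+d, x, b+2, z, heq2, by omega, by omega⟩
        · -- a ≥ 2 (b = c = 0)
          obtain ⟨x, rfl⟩ : ∃ x, a = x + 2 := ⟨a - 2, by omega⟩
          rcases le_or_gt g1 QQ with hgQ | hgQ
          · have heq2 : 4*(t+g1+1) + x*n1 + (b+1)*n2 + c*n3 = n := by simp only [add_mul, one_mul] at heq ⊢; omega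
            rcases Nat.lt_or_ge 0 g1 with hk | hk
            · exact ⟨t+g1+1, x, b+1, c, heq2, by omega, by omega⟩
            · obtain ⟨T, A, B, C, H1, H2, H3⟩ :=
                IH (x + (b+1) + c) (by omega) (t+g1+1) x (b+1) c t' a' b' c' n heq2 heq' (by omega) rfl
              exact ⟨T, A, B, C, H1, by omega, by omega⟩
          · have hn21 : n2 < n1 := by omega
            have hn32 : n3 < n2 := by omega
            obtain ⟨f, hf1, hf2, hf3, hf4⟩ : ∃ f, n1 = n3 + 2*f ∧ 1 ≤ f ∧ f ≤ QQ ∧ f ≤ AA :=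
              ⟨(n1-n3)/2, by omega⟩
            have heq2 : 4*(t+f) + x*n1 + b*n2 + (c+2)*n3 = n := by simp only [add_mul, one_mul] at heq ⊢; omega
            exact ⟨t+f, x, b, c+2, heq2, by omega, by omega⟩
    · rcases Nat.lt_or_ge 0 b with hB | hB
      · rcases Nat.lt_or_ge 0 c with hC | hC
        · -- trade (2,3) -> 1, gain k2
          obtain ⟨y, rfl⟩ : ∃ y, b = y + 1 := ⟨b - 1, by omega⟩
          obtain ⟨z, rfl⟩ : ∃ z, c = z + 1 := ⟨c - 1, by omega⟩
          have heq2 : 4*(t+k2+1) + (a+1)*n1 + y*n2 + z*n3 = n := by simp only [add_mul, one_mul] at heq ⊢; omega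
          rcases Nat.lt_or_ge 0 k2 with hk | hk
          · exact ⟨t+k2+1, a+1, y, z, heq2, by omega, by omega⟩
          · obtain ⟨T, A, B, C, H1, H2, H3⟩ :=
              IH ((a+1) + y + z) (by omega) (t+k2+1) (a+1) y z t' a' b' c' n heq2 heq' (by omega) rfl
            exact ⟨T, A, B, C, H1, by omega, by omega⟩
        · -- b ≥ 2
          obtain ⟨y, rfl⟩ : ∃ y, b = y + 2 := ⟨b - 2, by omega⟩
          rcases le_or_gt QQ AA with hQA | hQA
          · have heq2 : 4*(t+QQ+2) + a*n1 + y*n2 + c*n3 = n := by simp only [add_mul, one_mul] at heq ⊢; omega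
            exact ⟨t+QQ+2, a, y, c, heq2, by omega, by omega⟩
          · obtain ⟨d, hd1, hd2, hd3⟩ : ∃ d, QQ = AA + d ∧ 1 ≤ d ∧ d ≤ AA :=
              ⟨QQ - AA, by omega⟩
            have heq2 : 4*(t+d) + (a+1)*n1 + y*n2 + (c+1)*n3 = n := by simp only [add_mul, one_mul] at heq ⊢; omega
            exact ⟨t+d, a+1, y, c+1, heq2, by omega, by omega⟩
      · -- c ≥ 2
        obtain ⟨z, rfl⟩ : ∃ z, c = z + 2 := ⟨c - 2, by omega⟩
        rcases le_or_gt g2 QQ with hgQ | hgQ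
        · have heq2 : 4*(t+g2+1) + a*n1 + (b+1)*n2 + z*n3 = n := by simp only [add_mul, one_mul] at heq ⊢; omega
          rcases Nat.lt_or_ge 0 g2 with hk | hk
          · exact ⟨t+g2+1, a, b+1, z, heq2, by omega, by omega⟩
          · obtain ⟨T, A, B, C, H1, H2, H3⟩ :=
              IH (a + (b+1) + z) (by omega) (t+g2+1) a (b+1) z t' a' b' c' n heq2 heq' (by omega) rfl
            exact ⟨T, A, B, C, H1, by omega, by omega⟩
        · have hn23 : n2 < n3 := by omega
          have hn12 : n1 < n2 := by omega
          obtain ⟨f, hf1, hf2, hf3, hf4⟩ : ∃ f, n3 = n1 + 2*f ∧ 1 ≤ f ∧ f ≤ QQ ∧ f ≤ AA :=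
            ⟨(n3-n1)/2, by omega⟩
          have heq2 : 4*(t+f) + (a+2)*n1 + b*n2 + z*n3 = n := by simp only [add_mul, one_mul] at heq ⊢; omega
          exact ⟨t+f, a+2, b, z, heq2, by omega, by omega⟩

lemma ls_subset (n1 n2 n3 n : ℕ) (h1 : 0 < n1) (h2 : 0 < n2) (h3 : 0 < n3) :
    lengthSet ![4, n1, n2, n3] n ⊆ Set.Iic n := by
  intro L hL
  rw [mem_ls_iff] at hL
  obtain ⟨t, a, b, c, heq, rfl⟩ := hL
  simp only [Set.mem_Iic]
  nlinarith [heq]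

lemma ls_finite (n1 n2 n3 n : ℕ) (h1 : 0 < n1) (h2 : 0 < n2) (h3 : 0 < n3) :
    (lengthSet ![4, n1, n2, n3] n).Finite :=
  (Set.finite_Iic n).subset (ls_subset n1 n2 n3 n h1 h2 h3)

-- generic chain lemma

lemma chain_bound (D : ℕ) : ∀ (k : ℕ) (S : Set ℕ), S.Finite → S.Nonempty → S.ncard ≤ k →
    (∀ a ∈ S, (∃ b ∈ S, a < b) → ∃ c ∈ S, a < c ∧ c ≤ a + D) →
    sSup S ≤ sInf S + D * (S.ncard - 1) := by
  intro k
  induction k with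
  | zero => intro S hfin hne hcard hgap
            exact absurd (Set.ncard_pos hfin |>.mpr hne) (by omega)
  | succ k IH =>
    intro S hfin hne hcard hgap
    have hbdd : BddAbove S := hfin.bddAbove
    have hMmem : sSup S ∈ S := Nat.sSup_mem hne hbdd
    have hmmem : sInf S ∈ S := Nat.sInf_mem hne
    rcases le_or_gt (sSup S) (sInf S) with hle | hlt
    · omega
    · obtain ⟨cc, hccS, hcc1, hcc2⟩ := hgap (sInf S) hmmem ⟨sSup S, hMmem, hlt⟩
      set S' := S \ {sInf S} with hS'
      have hfin' : S'.Finite := hfin.subset Set.diff_subset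
      have hne' : S'.Nonempty := ⟨cc, hccS, by simp; omega⟩
      have hcard' : S'.ncard = S.ncard - 1 := Set.ncard_diff_singleton_of_mem hmmem
      have hsub : ∀ x ∈ S', sInf S < x := by
        intro x hx
        have : sInf S ≤ x := Nat.sInf_le hx.1
        have : x ≠ sInf S := by simpa using hx.2
        omega
      have hSup' : sSup S' = sSup S := by
        apply le_antisymm
        · exact csSup_le_csSup hbdd hne' Set.diff_subset
        · exact le_csSup hfin'.bddAbove ⟨hMmem, by simp; omega⟩
      have hgap' : ∀ a ∈ S', (∃ b ∈ S', a < b) → ∃ c ∈ S', a < c ∧ c ≤ a + D := by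
        rintro a ha ⟨b, hb, hab⟩
        obtain ⟨c, hcS, h1, h2⟩ := hgap a ha.1 ⟨b, hb.1, hab⟩
        have := hsub a ha
        exact ⟨c, ⟨hcS, by simp; omega⟩, h1, h2⟩
      have hIH := IH S' hfin' hne' (by omega) hgap'
      have hInf' : sInf S' ≤ cc := Nat.sInf_le ⟨hccS, by simp; omega⟩
      have hcard2 : 2 ≤ S.ncard := by
        have : ({sInf S, sSup S} : Set ℕ) ⊆ S := by
          intro x hx; rcases hx with rfl | rfl; exacts [hmmem, hMmem]
        calc 2 = ({sInf S, sSup S} : Set ℕ).ncard := (Set.ncard_pair (by omega)).symm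
        _ ≤ S.ncard := Set.ncard_le_ncard this hfin
      rw [hSup'] at hIH
      obtain ⟨u, hu⟩ : ∃ u, S'.ncard = u + 1 :=
        ⟨S'.ncard - 1, by have : 1 ≤ S'.ncard := (Set.ncard_pos hfin').mpr hne'; omega⟩
      rw [hu, Nat.add_sub_cancel] at hIH
      have hfin2 : sSup S ≤ sInf S + D + D * u := by omega
      have hgoal : S.ncard - 1 = u + 1 := by omega
      rw [hgoal, Nat.mul_add, Nat.mul_one]
      omega

lemma witness_ls (n1 n2 n3 AA QQ : ℕ) (h1 : 4 < n1) (h2 : 4 < n2) (h3 : 4 < n3)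
    (hm1 : n1 % 4 = 1) (hm2 : n2 % 4 = 2) (hm3 : n3 % 4 = 3)
    (hc1 : n2 < 2 * n1) (hc2 : n3 < n1 + n2) (hc3 : n1 < n2 + n3)
    (hc4 : n2 < 2 * n3)
    (hAA : n1 + n3 = 4*AA + 8) (hQQ : n2 = 2*QQ + 4) :
    lengthSet ![4, n1, n2, n3] (4 * min AA QQ + 8) = {2, min AA QQ + 2} := by
  apply Set.eq_of_subset_of_subset
  · intro L hL
    rw [mem_ls_iff] at hL
    obtain ⟨t, a, b, c, heq, rfl⟩ := hL
    have hb2 : 4 * min AA QQ + 8 ≤ 2 * n2 := by omega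
    have ha3 : a ≤ 3 := by
      by_contra h
      have h4 : 4 * n1 ≤ a * n1 := Nat.mul_le_mul_right n1 (by omega)
      omega
    have hbb : b ≤ 3 := by
      by_contra h
      have h4 : 4 * n2 ≤ b * n2 := Nat.mul_le_mul_right n2 (by omega)
      omega
    have hcc : c ≤ 3 := by
      by_contra h
      have h4 : 4 * n3 ≤ c * n3 := Nat.mul_le_mul_right n3 (by omega)
      omega
    simp only [Set.mem_insert_iff, Set.mem_singleton_iff]
    interval_cases a <;> interval_cases b <;> interval_cases c <;> omega
  · intro L hL
    simp only [Set.mem_insert_iff, Set.mem_singleton_iff] at hL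
    rcases hL with rfl | rfl
    · rcases le_total AA QQ with hAQ | hAQ
      · rw [mem_ls_iff]
        exact ⟨0, 1, 0, 1, by omega, by omega⟩
      · rw [mem_ls_iff]
        exact ⟨0, 0, 2, 0, by omega, by omega⟩
    · rw [mem_ls_iff]
      exact ⟨min AA QQ + 2, 0, 0, 0, by omega, by omega⟩

lemma gap_step (n1 n2 n3 AA QQ : ℕ) (h1 : 4 < n1) (h2 : 4 < n2) (h3 : 4 < n3)
    (hm1 : n1 % 4 = 1) (hm2 : n2 % 4 = 2) (hm3 : n3 % 4 = 3)
    (hc1 : n2 < 2 * n1) (hc2 : n3 < n1 + n2) (hc3 : n1 < n2 + n3)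
    (hc4 : n2 < 2 * n3)
    (hmin2 : min n1 (min n2 n3) ≠ n2)
    (hAA : n1 + n3 = 4*AA + 8) (hQQ : n2 = 2*QQ + 4) (n : ℕ) :
    ∀ a ∈ lengthSet ![4, n1, n2, n3] n,
      (∃ b ∈ lengthSet ![4, n1, n2, n3] n, a < b) →
      ∃ c ∈ lengthSet ![4, n1, n2, n3] n, a < c ∧ c ≤ a + min AA QQ := by
  rintro L hL ⟨M, hM, hLM⟩
  rw [mem_ls_iff] at hL hM
  obtain ⟨t, a, b, c, heq, rfl⟩ := hL
  obtain ⟨t', a', b', c', heq', hlen'⟩ := hM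
  obtain ⟨T, A, B, C, H1, H2, H3⟩ :=
    step n1 n2 n3 AA QQ h1 h2 h3 hm1 hm2 hm3 hc1 hc2 hc3 hc4 hmin2 hAA hQQ
      (a + b + c) t a b c t' a' b' c' n heq heq' (by omega) rfl
  exact ⟨T + A + B + C, (mem_ls_iff n1 n2 n3 n _).mpr ⟨T, A, B, C, H1, rfl⟩, H2, H3⟩

theorem stmt15 (n1 n2 n3 : ℕ) (h1 : 4 < n1) (h2 : 4 < n2) (h3 : 4 < n3)
    (hm1 : n1 % 4 = 1) (hm2 : n2 % 4 = 2) (hm3 : n3 % 4 = 3)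
    (hc1 : n2 < 2 * n1) (hc2 : n3 < n1 + n2) (hc3 : n1 < n2 + n3)
    (hc4 : n2 < 2 * n3)
    (hmin2 : min n1 (min n2 n3) ≠ n2) :
    Bland ![4, n1, n2, n3] := by
  obtain ⟨AA, hAA⟩ : ∃ A, n1 + n3 = 4*A + 8 := ⟨(n1+n3-8)/4, by omega⟩
  obtain ⟨QQ, hQQ⟩ : ∃ Q, n2 = 2*Q + 4 := ⟨(n2-4)/2, by omega⟩
  set g := ![4, n1, n2, n3] with hg
  set D := min AA QQ with hDdef
  have hD1 : 1 ≤ D := by omega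
  have hwit : lengthSet g (4 * D + 8) = {2, D + 2} :=
    witness_ls n1 n2 n3 AA QQ h1 h2 h3 hm1 hm2 hm3 hc1 hc2 hc3 hc4 hAA hQQ
  have hgap := gap_step n1 n2 n3 AA QQ h1 h2 h3 hm1 hm2 hm3 hc1 hc2 hc3 hc4 hmin2 hAA hQQ
  -- sSup of Delta
  have hDeltaGreatest : IsGreatest (Delta g) D := by
    constructor
    · refine Set.mem_iUnion.mpr ⟨4 * D + 8, ?_⟩
      unfold delta
      rw [hwit]
      refine ⟨2, by simp, D + 2, by simp, by omega, ?_, by omega⟩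
      rintro c (rfl | rfl) <;> omega
    · rintro d hd
      obtain ⟨n, hn⟩ := Set.mem_iUnion.mp hd
      obtain ⟨x, hx, y, hy, hxy, hcons, rfl⟩ := hn
      obtain ⟨c, hc, hc1', hc2'⟩ := hgap n x hx ⟨y, hy, hxy⟩
      have := hcons c hc
      omega
  have hSupDelta : sSup (Delta g) = D := hDeltaGreatest.csSup_eq
  -- LD at witness
  have hwitcard : (lengthSet g (4 * D + 8)).ncard = 2 := by
    rw [hwit]; exact Set.ncard_pair (by omega)
  have hwitLD : LD g (4 * D + 8) = 1 / (D : ℝ) := by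
    unfold LD
    rw [hwit]
    rw [Set.ncard_pair (show (2:ℕ) ≠ D + 2 by omega)]
    have hsup : sSup ({2, D + 2} : Set ℕ) = D + 2 := by
      rw [csSup_pair]; omega
    have hinf : sInf ({2, D + 2} : Set ℕ) = 2 := by
      rw [csInf_pair]; omega
    rw [hsup, hinf]
    push_cast
    rw [show ((D:ℝ) + 2 - 2) = (D:ℝ) by ring]
    norm_num
  -- lower bound for all LD values
  have hlb : ∀ x ∈ {x : ℝ | ∃ n : ℕ, 2 ≤ (lengthSet g n).ncard ∧ x = LD g n},
      1 / (D : ℝ) ≤ x := by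
    rintro x ⟨n, hn2, rfl⟩
    have hfin : (lengthSet g n).Finite := ls_finite n1 n2 n3 n (by omega) (by omega) (by omega)
    have hne : (lengthSet g n).Nonempty := by
      rcases Set.eq_empty_or_nonempty (lengthSet g n) with h | h
      · rw [h] at hn2; simp at hn2
      · exact h
    set L := lengthSet g n with hL
    have hMmem : sSup L ∈ L := Nat.sSup_mem hne hfin.bddAbove
    have hmmem : sInf L ∈ L := Nat.sInf_mem hne
    have hlt : sInf L < sSup L := by
      by_contra h
      push_neg at h
      have hsub : L ⊆ {sInf L} := by
        intro x hx
        have h1' : sInf L ≤ x := Nat.sInf_le hx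
        have h2' : x ≤ sSup L := le_csSup hfin.bddAbove hx
        simp; omega
      have := Set.ncard_le_ncard hsub (Set.finite_singleton _)
      simp [Set.ncard_singleton] at this
      omega
    have hchain := chain_bound D L.ncard L hfin hne le_rfl (hgap n)
    -- real arithmetic
    unfold LD
    rw [← hL]
    have hcast1 : ((L.ncard : ℝ) - 1) = ((L.ncard - 1 : ℕ) : ℝ) := by
      have : 1 ≤ L.ncard := by omega
      push_cast [this]; ring
    have hcast2 : ((sSup L : ℕ) : ℝ) - ((sInf L : ℕ) : ℝ) = ((sSup L - sInf L : ℕ) : ℝ) := by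
      have : sInf L ≤ sSup L := by omega
      push_cast [this]; ring
    rw [hcast1, hcast2]
    rw [div_le_div_iff₀ (by positivity) (by exact_mod_cast Nat.sub_pos_of_lt hlt)]
    rw [one_mul]
    calc ((sSup L - sInf L : ℕ) : ℝ) ≤ ((D * (L.ncard - 1) : ℕ) : ℝ) := by
          exact_mod_cast (by omega : sSup L - sInf L ≤ D * (L.ncard - 1))
      _ = ((L.ncard - 1 : ℕ) : ℝ) * (D : ℝ) := by push_cast; ring
  have hmem : (1 / (D : ℝ)) ∈ {x : ℝ | ∃ n : ℕ, 2 ≤ (lengthSet g n).ncard ∧ x = LD g n} :=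
    ⟨4 * D + 8, by rw [hwitcard], hwitLD.symm⟩
  have hleast : IsLeast {x : ℝ | ∃ n : ℕ, 2 ≤ (lengthSet g n).ncard ∧ x = LD g n} (1 / (D : ℝ)) :=
    ⟨hmem, hlb⟩
  unfold Bland LDsgp
  rw [hleast.csInf_eq, hSupDelta]
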